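/- arXiv:1805.07141 — 6 statements merged into one kernel-verified Lean document; each statement's English description precedes it below -/
import Mathlib

section
/- Let G be a simple graph with independence number at most d, let S be a set of vertices of G, and let W be an S-forest of G. Then |S ∩ W| ≤ 2d. -/
open SimpleGraph Walk Finset

lemma exists_low_deg {α : Type*} [DecidableEq α] (H : SimpleGraph α) [DecidableRel H.Adj] (T : Finset α) (hne : T.Nonempty)
    (hcyc : ∀ (u : α) (c : H.Walk u u), c.IsCycle → ¬ (∀ x ∈ c.support, x ∈ T)) :
    ∃ v ∈ T, (T.filter (H.Adj v)).card ≤ 1 := by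
  by_contra hcon
  push_neg at hcon
  set Ls : Set ℕ := {n | ∃ (u v : α) (p : H.Walk u v), p.IsPath ∧ (∀ x ∈ p.support, x ∈ T) ∧
    p.length = n} with hLs
  obtain ⟨v0, hv0⟩ := hne
  have hLne : Ls.Nonempty := ⟨0, v0, v0, Walk.nil, by simp, by simpa using hv0, rfl⟩
  have hbdd : ∀ n ∈ Ls, n ≤ T.card := by
    rintro n ⟨u, v, p, hp, hsup, rfl⟩
    have hsubT : p.support.toFinset ⊆ T := fun x hx => hsup x (by simpa using hx)
    have h2 := Finset.card_le_card hsubT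
    rw [List.toFinset_card_of_nodup hp.support_nodup] at h2
    have := p.length_support
    omega
  have hmem : sSup Ls ∈ Ls := Nat.sSup_mem hLne ⟨T.card, hbdd⟩
  obtain ⟨u, v, p, hp, hsup, hlen⟩ := hmem
  have hmax : ∀ m ∈ Ls, m ≤ sSup Ls := fun m hm => le_csSup ⟨T.card, hbdd⟩ hm
  have huT : u ∈ T := hsup u p.start_mem_support
  have hnbr : ∀ w, w ∈ T → H.Adj u w → w ∈ p.support := by
    intro w hwT hadj
    by_contra hws
    have hq : (Walk.cons (H.adj_symm hadj) p).IsPath := hp.cons hws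
    have hmem1 : p.length + 1 ∈ Ls := by
      refine ⟨w, v, _, hq, ?_, by simp⟩
      intro x hx
      rw [Walk.support_cons, List.mem_cons] at hx
      rcases hx with rfl | hx
      · exact hwT
      · exact hsup x hx
    have := hmax _ hmem1
    omega
  cases p with
  | nil =>
    obtain ⟨a, ha, -⟩ := Finset.one_lt_card.mp (hcon u huT)
    simp only [Finset.mem_filter] at ha
    have := hnbr a ha.1 ha.2
    simp only [Walk.support_nil, List.mem_singleton] at this
    exact H.irrefl (this ▸ ha.2)
  | @cons _ b _ h q =>
    obtain ⟨w, hwT, hwadj, hwb⟩ : ∃ w, w ∈ T ∧ H.Adj u w ∧ w ≠ b := by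
      obtain ⟨a, ha, a', ha', haa⟩ := Finset.one_lt_card.mp (hcon u huT)
      simp only [Finset.mem_filter] at ha ha'
      by_cases h1 : a = b
      · exact ⟨a', ha'.1, ha'.2, fun e => haa (h1.trans e.symm)⟩
      · exact ⟨a, ha.1, ha.2, h1⟩
    have hws : w ∈ (Walk.cons h q).support := hnbr w hwT hwadj
    have hune : u ∉ q.support := ((Walk.cons_isPath_iff h q).mp hp).2
    have hedge : s(u, w) ∉ (Walk.cons h q).edges := by
      intro he
      rw [Walk.edges_cons, List.mem_cons] at he
      rcases he with he | he
      · rw [Sym2.eq_iff] at he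
        rcases he with ⟨-, rfl⟩ | ⟨rfl, -⟩
        · exact hwb rfl
        · exact H.irrefl h
      · exact hune (Walk.fst_mem_support_of_mem_edges q he)
    set r := (Walk.cons h q).takeUntil w hws with hr_def
    have hr : r.IsPath := hp.takeUntil hws
    have hc : (Walk.cons hwadj r.reverse).IsCycle := by
      rw [Walk.cons_isCycle_iff]
      refine ⟨hr.reverse, ?_⟩
      rw [Walk.edges_reverse, List.mem_reverse]
      exact fun hh => hedge (Walk.edges_takeUntil_subset _ hws hh)
    refine hcyc u _ hc ?_
    intro x hx
    rw [Walk.support_cons, List.mem_cons] at hx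
    rcases hx with rfl | hx
    · exact huT
    · rw [Walk.support_reverse, List.mem_reverse] at hx
      exact hsup x (Walk.support_takeUntil_subset _ hws hx)

lemma forest_half {α : Type*} [DecidableEq α] (H : SimpleGraph α) [DecidableRel H.Adj] :
    ∀ (n : ℕ) (T : Finset α), T.card ≤ n →
    (∀ (u : α) (c : H.Walk u u), c.IsCycle → ¬ (∀ x ∈ c.support, x ∈ T)) →
    ∃ I : Finset α, I ⊆ T ∧ (↑I : Set α).Pairwise (fun a b => ¬ H.Adj a b) ∧
      T.card ≤ 2 * I.card := by
  classical
  intro n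
  induction n with
  | zero =>
    intro T hT _
    exact ⟨∅, by simp, by simp, by omega⟩
  | succ n ih =>
    intro T hT hcyc
    rcases T.eq_empty_or_nonempty with rfl | hne
    · exact ⟨∅, by simp, by simp, by simp⟩
    obtain ⟨v, hvT, hdeg⟩ := exists_low_deg H T hne hcyc
    set N : Finset α := T.filter (H.Adj v) with hN
    set T' : Finset α := T \ insert v N with hT'
    have hvT' : v ∉ T' := by simp [hT']
    have hT'le : T'.card ≤ n := by
      have h1 : T' ⊆ T.erase v := by
        intro x hx
        rw [hT', Finset.mem_sdiff] at hx
        exact Finset.mem_erase.mpr ⟨fun e => hx.2 (by simp [e]), hx.1⟩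
      have := Finset.card_le_card h1
      have := Finset.card_erase_of_mem hvT
      omega
    have hcyc' : ∀ (u : α) (c : H.Walk u u), c.IsCycle → ¬ (∀ x ∈ c.support, x ∈ T') :=
      fun u c hc hall => hcyc u c hc fun x hx => (Finset.mem_sdiff.mp (hall x hx)).1
    obtain ⟨I, hIsub, hIpw, hIcard⟩ := ih T' hT'le hcyc'
    have hvI : v ∉ I := fun hv => hvT' (hIsub hv)
    refine ⟨insert v I, ?_, ?_, ?_⟩
    · intro x hx
      rcases Finset.mem_insert.mp hx with rfl | hx
      · exact hvT
      · exact (Finset.mem_sdiff.mp (hIsub hx)).1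
    · rw [Finset.coe_insert]
      refine (haveI : Std.Symm (fun a b : α => ¬ H.Adj a b) := ⟨fun a b hab => by rwa [H.adj_comm] at hab⟩; Set.pairwise_insert_of_symm).mpr
        ⟨hIpw, ?_⟩
      intro b hb hbv hadj
      have hbT' := hIsub hb
      rw [hT', Finset.mem_sdiff] at hbT'
      exact hbT'.2 (Finset.mem_insert.mpr (Or.inr (Finset.mem_filter.mpr ⟨hbT'.1, hadj⟩)))
    · have hcardins : (insert v I).card = I.card + 1 := Finset.card_insert_of_notMem hvI
      have hsplit : T.card ≤ T'.card + 2 := by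
        have h1 : T ⊆ T' ∪ insert v N := by
          intro x hx
          by_cases hx2 : x ∈ insert v N
          · exact Finset.mem_union_right _ hx2
          · exact Finset.mem_union_left _ (Finset.mem_sdiff.mpr ⟨hx, hx2⟩)
        have h2 := Finset.card_le_card h1
        have h3 := Finset.card_union_le T' (insert v N)
        have h4 : (insert v N).card ≤ N.card + 1 := Finset.card_insert_le v N
        omega
      omega

/-- `W` is an `S`-forest of `G`: no cycle of the induced subgraph `G[W]`
contains a vertex of `S`. -/
def SForest {V : Type*} (G : SimpleGraph V) (S W : Set V) : Prop :=
  ∀ (u : W) (c : (G.induce W).Walk u u), c.IsCycle → ∀ v ∈ c.support, (v : V) ∉ S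

/-- If every independent set of `G` has at most `d` vertices and `W` is an
`S`-forest of `G`, then `|S ∩ W| ≤ 2d`. -/
theorem stmt1 {V : Type*} [Fintype V] (G : SimpleGraph V) (d : ℕ)
    (hα : ∀ I : Set V, I.Pairwise (fun u v => ¬ G.Adj u v) → I.ncard ≤ d)
    (S W : Set V) (hW : SForest G S W) :
    (S ∩ W).ncard ≤ 2 * d := by
  classical
  set H : SimpleGraph ↥W := G.induce W with hH
  set Tset : Set ↥W := {x : ↥W | (x : V) ∈ S} with hTset
  have hfin : Tset.Finite := Set.toFinite _
  set T : Finset ↥W := hfin.toFinset with hT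
  have hcyc : ∀ (u : ↥W) (c : H.Walk u u), c.IsCycle → ¬ (∀ x ∈ c.support, x ∈ T) := by
    intro u c hc hall
    have h1 := hW u c hc u c.start_mem_support
    have hu : u ∈ T := hall u c.start_mem_support
    rw [hT, Set.Finite.mem_toFinset] at hu
    exact h1 hu
  obtain ⟨I, hIsub, hIpw, hIcard⟩ := forest_half H T.card T le_rfl hcyc
  set J : Set V := Subtype.val '' (↑I : Set ↥W) with hJ
  have hJpw : J.Pairwise (fun a b => ¬ G.Adj a b) := by
    rintro a ⟨x, hx, rfl⟩ b ⟨y, hy, rfl⟩ hne hadj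
    have hxy : x ≠ y := fun e => hne (by rw [e])
    refine hIpw hx hy hxy ?_
    simpa [hH] using hadj
  have hJcard : J.ncard = I.card := by
    rw [hJ, Set.ncard_image_of_injective _ Subtype.val_injective, Set.ncard_coe_finset]
  have hSW : (S ∩ W) = Subtype.val '' Tset := by
    ext a; constructor
    · rintro ⟨ha, hw⟩; exact ⟨⟨a, hw⟩, ha, rfl⟩
    · rintro ⟨x, hx, rfl⟩; exact ⟨hx, x.2⟩
  have h1 : (S ∩ W).ncard = T.card := by
    rw [hSW, Set.ncard_image_of_injective _ Subtype.val_injective,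
      Set.ncard_eq_toFinset_card _ hfin]
  have h2 := hα J hJpw
  omega
end

section
/- Let G be a simple graph with independence number at most d, let S be a set of vertices of G, and let W be an S-forest of G with 1 ≤ |S ∩ W| ≤ 2d − 2. Let S_{≤1} be the set of vertices of W that belong to S ∩ W or have a G-neighbor in S ∩ W. Then |S_{≤1}| ≤ 4d − 2. -/
open SimpleGraph
set_option linter.unusedSectionVars false
namespace SF
section
variable {V : Type*} [Fintype V] (G : SimpleGraph V) (S W : Set V)

def SForest' : Prop :=
  ∀ (u : W) (c : (G.induce W).Walk u u), c.IsCycle → ∀ v ∈ c.support, (v : V) ∉ S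

def GW : SimpleGraph V where
  Adj x y := G.Adj x y ∧ x ∈ W ∧ y ∈ W
  symm := by constructor; intro x y ⟨h, hx, hy⟩; exact ⟨h.symm, hy, hx⟩
  loopless := by constructor; intro x ⟨h, _⟩; exact G.loopless.irrefl x h

def F0 : SimpleGraph V where
  Adj x y := (GW G W).Adj x y ∧ (x ∈ S ∩ W ∨ y ∈ S ∩ W)
  symm := by constructor; intro x y ⟨h, ht⟩; exact ⟨h.symm, ht.symm⟩
  loopless := by constructor; intro x ⟨h, _⟩; exact (GW G W).loopless.irrefl x h

noncomputable def fcmp (v : V) : (F0 G S W).ConnectedComponent :=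
  (F0 G S W).connectedComponentMk v

def NP : Set V := {u | u ∈ W ∧ u ∉ S ∧ ∃ t ∈ S ∩ W, G.Adj u t}

def XAdj (x y : V) : Prop :=
  G.Adj x y ∧ x ∈ NP G S W ∧ y ∈ NP G S W ∧ fcmp G S W x ≠ fcmp G S W y

variable {G S W}

lemma XAdj.symm' {x y : V} (h : XAdj G S W x y) : XAdj G S W y x :=
  ⟨h.1.symm, h.2.2.1, h.2.1, h.2.2.2.symm⟩

/-- lift a GW walk to an induced walk -/
def liftWalk : ∀ {x y : V} (_ : (GW G W).Walk x y) (hx : x ∈ W) (hy : y ∈ W),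
    (G.induce W).Walk ⟨x, hx⟩ ⟨y, hy⟩
  | _, _, SimpleGraph.Walk.nil, _, _ => SimpleGraph.Walk.nil
  | _, _, SimpleGraph.Walk.cons h p, hx, hy =>
      SimpleGraph.Walk.cons (show (G.induce W).Adj ⟨_, hx⟩ ⟨_, h.2.2⟩ from h.1)
        (liftWalk p h.2.2 hy)

lemma liftWalk_support {x y : V} (p : (GW G W).Walk x y) (hx : x ∈ W) (hy : y ∈ W) :
    (liftWalk p hx hy).support.map Subtype.val = p.support := by
  induction p with
  | nil => simp [liftWalk]
  | cons h p ih => simp [liftWalk, ih]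

lemma liftWalk_edges {x y : V} (p : (GW G W).Walk x y) (hx : x ∈ W) (hy : y ∈ W) :
    (liftWalk p hx hy).edges.map (Sym2.map Subtype.val) = p.edges := by
  induction p with
  | nil => simp [liftWalk]
  | cons h p ih => simp [liftWalk, ih]

lemma liftWalk_length {x y : V} (p : (GW G W).Walk x y) (hx : x ∈ W) (hy : y ∈ W) :
    (liftWalk p hx hy).length = p.length := by
  induction p with
  | nil => simp [liftWalk]
  | cons h p ih => simp [liftWalk, ih]

lemma liftWalk_isCycle {x : V} (p : (GW G W).Walk x x) (hx : x ∈ W) (hp : p.IsCycle) :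
    (liftWalk p hx hx).IsCycle := by
  obtain ⟨⟨⟨edup⟩, hnil⟩, hsup⟩ := hp
  refine ⟨⟨⟨?_⟩, ?_⟩, ?_⟩
  · exact List.Nodup.of_map _ (by rw [liftWalk_edges]; exact edup)
  · intro h
    apply hnil
    have hl := liftWalk_length p hx hx
    rw [h] at hl
    simp only [SimpleGraph.Walk.length_nil] at hl
    exact SimpleGraph.Walk.Nil.eq_nil
      (SimpleGraph.Walk.nil_iff_length_eq.mpr hl.symm)
  · apply List.Nodup.of_map (f := Subtype.val)
    have htl : ((liftWalk p hx hx).support.map Subtype.val).tail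
        = ((liftWalk p hx hx).support.tail).map Subtype.val := by
      cases (liftWalk p hx hx).support <;> simp
    rw [← htl, liftWalk_support]
    exact hsup

lemma hWcyc (hW : SForest' G S W) :
    ∀ (u : V) (p : (GW G W).Walk u u), p.IsCycle → ∀ v ∈ p.support, v ∉ S := by
  intro u p hp v hv hvS
  have hu : u ∈ W := by
    cases p with
    | nil => exact absurd rfl hp.ne_nil
    | cons h q => exact h.2.1
  have hlc := liftWalk_isCycle p hu hp
  have hsup := liftWalk_support p hu hu
  rw [← hsup] at hv
  obtain ⟨v', hv', rfl⟩ := List.mem_map.mp hv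
  exact hW ⟨u, hu⟩ (liftWalk p hu hu) hlc v' hv' hvS

lemma bridgeT (hW : SForest' G S W) {x y : V} (hadj : (GW G W).Adj x y)
    (ht : x ∈ S ∩ W ∨ y ∈ S ∩ W) : (GW G W).IsBridge s(x, y) := by
  rw [SimpleGraph.isBridge_iff_adj_and_forall_cycle_notMem hadj]
  intro u p hp he
  rcases ht with hx | hy
  · exact hWcyc hW u p hp x (SimpleGraph.Walk.fst_mem_support_of_mem_edges p he) hx.1
  · exact hWcyc hW u p hp y (SimpleGraph.Walk.snd_mem_support_of_mem_edges p he) hy.1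

def Dset (c : (F0 G S W).ConnectedComponent) : Set (Sym2 V) :=
  {e | (∃ v, v ∈ e ∧ v ∈ S ∩ W) ∧ ∀ v, v ∈ e → fcmp G S W v = c}

def Dg (c : (F0 G S W).ConnectedComponent) : SimpleGraph V :=
  (GW G W).deleteEdges (Dset c)

lemma F0_le_GW : (F0 G S W) ≤ (GW G W) := fun _ _ h => h.1

lemma Dg_le_GW (c : (F0 G S W).ConnectedComponent) : Dg c ≤ (GW G W) :=
  SimpleGraph.deleteEdges_le _

lemma edges_mapLe {G₁ G₂ : SimpleGraph V} (h : G₁ ≤ G₂) {u v : V} (p : G₁.Walk u v) :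
    (p.mapLe h).edges = p.edges := by
  induction p with
  | nil => rfl
  | cons ha q ih => simp [SimpleGraph.Walk.mapLe, SimpleGraph.Walk.edges_map] at ih ⊢

lemma M2 (hW : SForest' G S W) {a b : V} (h1 : (F0 G S W).Reachable a b)
    (h2 : (Dg (fcmp G S W a)).Reachable a b) : a = b := by
  classical
  obtain ⟨w⟩ := h1
  have hp : w.bypass.IsPath := SimpleGraph.Walk.bypass_isPath w
  set p := w.bypass with hpdef
  clear_value p
  cases p with
  | nil => rfl
  | @cons _ a₁ _ h q =>
    exfalso
    rw [SimpleGraph.Walk.cons_isPath_iff] at hp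
    have hcmp1 : fcmp G S W a₁ = fcmp G S W a :=
      (SimpleGraph.ConnectedComponent.sound h.reachable).symm
    have hcmpb : fcmp G S W b = fcmp G S W a := by
      have : (F0 G S W).Reachable a₁ b := ⟨q⟩
      rw [← hcmp1]
      exact (SimpleGraph.ConnectedComponent.sound this).symm
    have heD : s(a, a₁) ∈ Dset (G := G) (S := S) (W := W) (fcmp G S W a) := by
      constructor
      · obtain ht | ht := h.2
        · exact ⟨a, by simp, ht⟩
        · exact ⟨a₁, by simp, ht⟩
      · intro v hv
        rw [Sym2.mem_iff] at hv
        rcases hv with rfl | rfl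
        · rfl
        · exact hcmp1
    have hbr := bridgeT hW h.1 h.2
    rw [SimpleGraph.isBridge_iff] at hbr
    apply hbr
    rw [SimpleGraph.reachable_delete_edges_iff_exists_walk]
    -- walk from a to a₁ in GW avoiding the edge
    obtain ⟨r⟩ := h2
    refine ⟨((r.mapLe (Dg_le_GW _)).append ((q.mapLe F0_le_GW).reverse)), ?_⟩
    intro hmem
    rw [SimpleGraph.Walk.edges_append, List.mem_append] at hmem
    rcases hmem with hmem | hmem
    · rw [edges_mapLe] at hmem
      have := SimpleGraph.Walk.edges_subset_edgeSet r hmem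
      rw [Dg, SimpleGraph.edgeSet_deleteEdges] at this
      exact this.2 heD
    · rw [SimpleGraph.Walk.edges_reverse, List.mem_reverse, edges_mapLe] at hmem
      exact hp.2 (SimpleGraph.Walk.fst_mem_support_of_mem_edges q hmem)

lemma nonTedge {x y : V} (hx : x ∈ W) (hy : y ∈ W) (hxS : x ∉ S) (hyS : y ∉ S)
    (hadj : G.Adj x y) (c : (F0 G S W).ConnectedComponent) : (Dg (G := G) (S := S) c).Adj x y := by
  constructor
  · exact ⟨hadj, hx, hy⟩
  · intro hD
    rw [SimpleGraph.fromEdgeSet_adj] at hD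
    have hD' : (∃ v, v ∈ s(x, y) ∧ v ∈ S ∩ W) ∧ ∀ v, v ∈ s(x, y) → fcmp G S W v = c := hD.1
    obtain ⟨⟨v, hv, hvS⟩, -⟩ := hD'
    rw [Sym2.mem_iff] at hv
    rcases hv with rfl | rfl
    · exact hxS hvS.1
    · exact hyS hvS.1

lemma L1 (hW : SForest' G S W) {x y : V} (hx : x ∈ NP G S W) (hy : y ∈ NP G S W)
    (hne : x ≠ y) (hc : fcmp G S W x = fcmp G S W y) : ¬ G.Adj x y := by
  intro hadj
  apply hne
  apply M2 hW (SimpleGraph.ConnectedComponent.exact hc)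
  exact (nonTedge hx.1 hy.1 hx.2.1 hy.2.1 hadj _).reachable

def ΛG (E : Finset (Sym2 V)) (c : (F0 G S W).ConnectedComponent) : SimpleGraph V where
  Adj x y := x ≠ y ∧ ((s(x, y) ∈ E ∧ XAdj G S W x y) ∨ (fcmp G S W x = fcmp G S W y ∧ fcmp G S W x ≠ c))
  symm := by
    constructor
    intro x y ⟨hne, h⟩
    refine ⟨hne.symm, ?_⟩
    rcases h with ⟨he, hx⟩ | ⟨h1, h2⟩
    · exact Or.inl ⟨by rwa [Sym2.eq_swap], hx.symm'⟩
    · exact Or.inr ⟨h1.symm, h1 ▸ h2⟩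
  loopless := ⟨fun x h => h.1 rfl⟩

lemma comp_reach_Dg (c : (F0 G S W).ConnectedComponent) {x y : V}
    (hxy : fcmp G S W x = fcmp G S W y) (hxc : fcmp G S W x ≠ c) :
    (Dg (G := G) (S := S) c).Reachable x y := by
  obtain ⟨w⟩ := SimpleGraph.ConnectedComponent.exact hxy
  clear hxy
  induction w with
  | nil => rfl
  | @cons u u₁ vv h q ih =>
    have hcmp : fcmp G S W u₁ = fcmp G S W u :=
      (SimpleGraph.ConnectedComponent.sound h.reachable).symm
    have hadj : (Dg (G := G) (S := S) c).Adj u u₁ := by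
      refine ⟨h.1, ?_⟩
      intro hD
      rw [SimpleGraph.fromEdgeSet_adj] at hD
      have hD' : (∃ v, v ∈ s(u, u₁) ∧ v ∈ S ∩ W) ∧ ∀ v, v ∈ s(u, u₁) → fcmp G S W v = c := hD.1
      apply hxc
      exact hD'.2 u (Sym2.mem_mk_left u u₁)
    exact hadj.reachable.trans (ih (by rwa [hcmp]))

lemma M2star (hW : SForest' G S W) (E : Finset (Sym2 V)) (c : (F0 G S W).ConnectedComponent)
    {x y : V} (hx : fcmp G S W x = c) (hy : fcmp G S W y = c)
    (hr : (ΛG (G := G) (S := S) (W := W) E c).Reachable x y) : x = y := by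
  have hDg : (Dg (G := G) (S := S) c).Reachable x y := by
    clear hx hy
    obtain ⟨w⟩ := hr
    induction w with
    | nil => rfl
    | @cons u u₁ vv h q ih =>
      rcases h.2 with ⟨-, hX⟩ | ⟨h1, h2⟩
      · exact ((nonTedge hX.2.1.1 hX.2.2.1.1 hX.2.1.2.1 hX.2.2.1.2.1 hX.1 _).reachable).trans ih
      · exact (comp_reach_Dg _ h1 h2).trans ih
  exact M2 hW (SimpleGraph.ConnectedComponent.exact (hx.trans hy.symm)) (by rwa [hx])

lemma XAdj_ne {x y : V} (h : XAdj G S W x y) : x ≠ y := by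
  intro hxy
  exact h.2.2.2 (by rw [hxy])

lemma U (hW : SForest' G S W) (E : Finset (Sym2 V)) :
    (∀ x y, s(x, y) ∈ E → XAdj G S W x y) → E.Nonempty →
    ∀ c₀ : (F0 G S W).ConnectedComponent,
    ∃ cH, cH ≠ c₀ ∧ ∃ pH, fcmp G S W pH = cH ∧ (∃ e ∈ E, pH ∈ e) ∧
      (∀ e ∈ E, (∀ v, v ∈ e → fcmp G S W v = cH → pH ∈ e)) := by
  classical
  induction E using Finset.strongInduction with
  | _ E IH =>
  intro hE hne c₀
  have key : ∀ p₀ : V, fcmp G S W p₀ ≠ c₀ → (∃ e ∈ E, p₀ ∈ e) →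
      ∃ cH, cH ≠ c₀ ∧ ∃ pH, fcmp G S W pH = cH ∧ (∃ e ∈ E, pH ∈ e) ∧
      (∀ e ∈ E, (∀ v, v ∈ e → fcmp G S W v = cH → pH ∈ e)) := by
    intro p₀ hp₀c hp₀e
    by_cases hm : ∃ x x', x ≠ x' ∧ fcmp G S W x = fcmp G S W p₀ ∧ fcmp G S W x' = fcmp G S W p₀ ∧
        (∃ e ∈ E, x ∈ e) ∧ (∃ e ∈ E, x' ∈ e)
    · -- multiport case
      obtain ⟨x, x', hxx, hcx, hcx', hex, hex'⟩ := hm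
      have hnr : ¬ (ΛG E (fcmp G S W p₀)).Reachable x x' :=
        fun h => hxx (M2star hW E (fcmp G S W p₀) hcx hcx' h)
      have hside : ∃ a, (∃ e ∈ E, a ∈ e) ∧
          (∃ e ∈ E, ∃ v, v ∈ e ∧ ¬ (ΛG E (fcmp G S W p₀)).Reachable a v) ∧
          (∀ z, (ΛG E (fcmp G S W p₀)).Reachable a z → fcmp G S W z ≠ c₀) := by
        by_cases hz : ∃ z, (ΛG E (fcmp G S W p₀)).Reachable x z ∧ fcmp G S W z = c₀
        · obtain ⟨ex, hexE, hxm⟩ := hex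
          refine ⟨x', hex', ⟨ex, hexE, x, hxm, fun h => hnr h.symm⟩, ?_⟩
          intro z' hz' hz'c
          obtain ⟨z, hzr, hzc⟩ := hz
          apply hnr
          rcases eq_or_ne z z' with rfl | hzz
          · exact hzr.trans hz'.symm
          · have hadj : (ΛG E (fcmp G S W p₀)).Adj z z' := by
              refine ⟨hzz, Or.inr ⟨by rw [hzc, hz'c], ?_⟩⟩
              rw [hzc]
              intro h
              exact hp₀c h.symm
            exact (hzr.trans hadj.reachable).trans hz'.symm
        · obtain ⟨ex', hex'E, hx'm⟩ := hex'
          refine ⟨x, hex, ⟨ex', hex'E, x', hx'm, fun h => hnr h⟩, ?_⟩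
          intro z hzr hzc
          exact hz ⟨z, hzr, hzc⟩
      obtain ⟨a, hae, ⟨ew, hewE, vw, hvwm, hvwnr⟩, hO⟩ := hside
      obtain ⟨ea, heaE, hamem⟩ := hae
      obtain ⟨b, rfl⟩ := Sym2.mem_iff_exists.mp hamem
      have hXab : XAdj G S W a b := hE _ _ heaE
      have hbΩ : (ΛG E (fcmp G S W p₀)).Reachable a b :=
        SimpleGraph.Adj.reachable ⟨XAdj_ne hXab, Or.inl ⟨heaE, hXab⟩⟩
      have heaEΩ : s(a, b) ∈ E.filter (fun e => ∀ v ∈ e, (ΛG E (fcmp G S W p₀)).Reachable a v) := by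
        rw [Finset.mem_filter]
        refine ⟨heaE, ?_⟩
        intro v hv
        rw [Sym2.mem_iff] at hv
        rcases hv with rfl | rfl
        · exact SimpleGraph.Reachable.refl _
        · exact hbΩ
      have hssub : E.filter (fun e => ∀ v ∈ e, (ΛG E (fcmp G S W p₀)).Reachable a v) ⊂ E := by
        rw [Finset.ssubset_iff_of_subset (Finset.filter_subset _ _)]
        refine ⟨ew, hewE, ?_⟩
        intro hmem
        exact hvwnr ((Finset.mem_filter.mp hmem).2 vw hvwm)
      obtain ⟨cH, hcHc₁, pH, hpHc, hpHe, hpHuni⟩ :=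
        IH _ hssub (fun x y hxy => hE x y (Finset.mem_filter.mp hxy).1)
          ⟨s(a, b), heaEΩ⟩ (fcmp G S W p₀)
      have hpHΩ : (ΛG E (fcmp G S W p₀)).Reachable a pH := by
        obtain ⟨e, heEΩ, hpm⟩ := hpHe
        exact (Finset.mem_filter.mp heEΩ).2 pH hpm
      have hcHc₀ : cH ≠ c₀ := by
        intro h
        exact hO pH hpHΩ (by rw [hpHc, h])
      refine ⟨cH, hcHc₀, pH, hpHc, ?_, ?_⟩
      · obtain ⟨e, heEΩ, hpm⟩ := hpHe
        exact ⟨e, (Finset.mem_filter.mp heEΩ).1, hpm⟩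
      · intro e heE v hvm hvc
        have hvΩ : (ΛG E (fcmp G S W p₀)).Reachable a v := by
          rcases eq_or_ne v pH with rfl | hvp
          · exact hpHΩ
          · refine hpHΩ.trans (SimpleGraph.Adj.reachable ?_)
            refine ⟨fun h => hvp h.symm, Or.inr ⟨hpHc.trans hvc.symm, ?_⟩⟩
            rw [hpHc]
            exact hcHc₁
        obtain ⟨w, rfl⟩ := Sym2.mem_iff_exists.mp hvm
        have hXvw : XAdj G S W v w := hE _ _ heE
        have hwΩ : (ΛG E (fcmp G S W p₀)).Reachable a w :=
          hvΩ.trans (SimpleGraph.Adj.reachable ⟨XAdj_ne hXvw, Or.inl ⟨heE, hXvw⟩⟩)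
        have hmemΩ : s(v, w) ∈ E.filter
            (fun e => ∀ u ∈ e, (ΛG E (fcmp G S W p₀)).Reachable a u) := by
          rw [Finset.mem_filter]
          refine ⟨heE, ?_⟩
          intro u hu
          rw [Sym2.mem_iff] at hu
          rcases hu with rfl | rfl
          · exact hvΩ
          · exact hwΩ
        exact hpHuni _ hmemΩ v (Sym2.mem_mk_left _ _) hvc
    · -- uniport case
      push_neg at hm
      refine ⟨fcmp G S W p₀, hp₀c, p₀, rfl, hp₀e, ?_⟩
      intro e heE v hv hvc
      rcases eq_or_ne v p₀ with rfl | hvp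
      · exact hv
      · obtain ⟨e₁, he₁E, hp₀m⟩ := hp₀e
        exact absurd hp₀m (hm v p₀ hvp hvc rfl ⟨e, heE, hv⟩ e₁ he₁E)
  obtain ⟨e₀, he₀⟩ := hne
  obtain ⟨⟨x₀, y₀⟩, rfl⟩ := Quot.exists_rep e₀
  have hX₀ : XAdj G S W x₀ y₀ := hE _ _ he₀
  by_cases h₀ : fcmp G S W x₀ = c₀
  · exact key y₀ (fun h => hX₀.2.2.2 (h₀.trans h.symm)) ⟨_, he₀, Sym2.mem_mk_right _ _⟩
  · exact key x₀ h₀ ⟨_, he₀, Sym2.mem_mk_left _ _⟩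

lemma mem_NP_of_mem_edge {E : Finset (Sym2 V)} (hE : ∀ x y, s(x, y) ∈ E → XAdj G S W x y)
    {e : Sym2 V} (heE : e ∈ E) {v : V} (hv : v ∈ e) : v ∈ NP G S W := by
  obtain ⟨w, rfl⟩ := Sym2.mem_iff_exists.mp hv
  exact (hE _ _ heE).2.1

lemma PC (hW : SForest' G S W) (E : Finset (Sym2 V)) :
    (∀ x y, s(x, y) ∈ E → XAdj G S W x y) →
    ∃ z : (F0 G S W).ConnectedComponent → Option V,
      (∀ c v, z c = some v → fcmp G S W v = c ∧ v ∈ NP G S W) ∧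
      (∀ x y, s(x, y) ∈ E →
        z (fcmp G S W x) = some x ∨ z (fcmp G S W y) = some y) := by
  classical
  induction E using Finset.strongInduction with
  | _ E IH =>
  intro hE
  rcases E.eq_empty_or_nonempty with rfl | hne
  · exact ⟨fun _ => none, by simp, by simp⟩
  obtain ⟨e₀, he₀⟩ := hne
  obtain ⟨⟨x₀, y₀⟩, rfl⟩ := Quot.exists_rep e₀
  obtain ⟨cH, -, pH, hpHc, hpHe, hpHuni⟩ :=
    U hW E hE ⟨_, he₀⟩ (fcmp G S W x₀)
  have hssub : E.filter (fun e => ¬ ∃ v, v ∈ e ∧ fcmp G S W v = cH) ⊂ E := by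
    rw [Finset.ssubset_iff_of_subset (Finset.filter_subset _ _)]
    obtain ⟨e, heE, hpm⟩ := hpHe
    refine ⟨e, heE, ?_⟩
    rw [Finset.mem_filter]
    push_neg
    intro _
    exact ⟨pH, hpm, hpHc⟩
  obtain ⟨z', hz'1, hz'2⟩ :=
    IH _ hssub (fun x y hxy => hE x y (Finset.mem_filter.mp hxy).1)
  refine ⟨Function.update z' cH (some pH), ?_, ?_⟩
  · intro c v hcv
    rcases eq_or_ne c cH with rfl | hc
    · rw [Function.update_self] at hcv
      have hv : v = pH := by
        injection hcv.symm
      subst hv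
      refine ⟨hpHc, ?_⟩
      obtain ⟨e, heE, hpm⟩ := hpHe
      exact mem_NP_of_mem_edge hE heE hpm
    · rw [Function.update_of_ne hc] at hcv
      exact hz'1 c v hcv
  · intro x y hxy
    by_cases hc : ∃ v, v ∈ s(x, y) ∧ fcmp G S W v = cH
    · obtain ⟨v, hv, hvc⟩ := hc
      have hpm : pH ∈ s(x, y) := hpHuni _ hxy v hv hvc
      rw [Sym2.mem_iff] at hpm
      rcases hpm with rfl | rfl
      · left
        rw [hpHc, Function.update_self]
      · right
        rw [hpHc, Function.update_self]
    · have hxy' : s(x, y) ∈ E.filter (fun e => ¬ ∃ v, v ∈ e ∧ fcmp G S W v = cH) :=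
        Finset.mem_filter.mpr ⟨hxy, hc⟩
      have hxc : fcmp G S W x ≠ cH := fun h => hc ⟨x, Sym2.mem_mk_left _ _, h⟩
      have hyc : fcmp G S W y ≠ cH := fun h => hc ⟨y, Sym2.mem_mk_right _ _, h⟩
      rcases hz'2 x y hxy' with h | h
      · left; rwa [Function.update_of_ne hxc]
      · right; rwa [Function.update_of_ne hyc]

open Classical in
noncomputable def domtE (G' : SimpleGraph V) (S' W' : Set V) (v : V) : V :=
  if h : v ∈ NP G' S' W' then Classical.choose h.2.2 else v

lemma domt_spec {v : V} (h : v ∈ NP G S W) :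
    domtE G S W v ∈ S ∩ W ∧ G.Adj v (domtE G S W v) := by
  rw [domtE, dif_pos h]
  obtain ⟨h1, h2⟩ := Classical.choose_spec h.2.2
  exact ⟨h1, h2⟩

lemma Tadj_cmp {t y : V} (ht : t ∈ S ∩ W) (hy : y ∈ W) (hadj : G.Adj t y) :
    fcmp G S W t = fcmp G S W y :=
  SimpleGraph.ConnectedComponent.sound
    (SimpleGraph.Adj.reachable (⟨⟨hadj, ht.2, hy⟩, Or.inl ht⟩ : (F0 G S W).Adj t y))

lemma NP_mem_W {v : V} (h : v ∈ NP G S W) : v ∈ W := h.1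

lemma core (hW : SForest' G S W) :
    ∃ I : Finset V, ((I : Set V).Pairwise fun u v => ¬ G.Adj u v) ∧
      (NP G S W).ncard ≤ 2 * I.card := by
  classical
  set EX : Finset (Sym2 V) :=
    ((Finset.univ : Finset (V × V)).filter (fun p => XAdj G S W p.1 p.2)).image
      (fun p => s(p.1, p.2)) with hEX
  have hEXadj : ∀ x y, s(x, y) ∈ EX → XAdj G S W x y := by
    intro x y hxy
    rw [hEX, Finset.mem_image] at hxy
    obtain ⟨⟨u, w⟩, hu, huv⟩ := hxy
    rw [Finset.mem_filter] at hu
    have hX := hu.2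
    rw [Sym2.eq_iff] at huv
    rcases huv with ⟨rfl, rfl⟩ | ⟨rfl, rfl⟩
    · exact hX
    · exact hX.symm'
  have hEXfull : ∀ x y, XAdj G S W x y → s(x, y) ∈ EX := by
    intro x y h
    rw [hEX, Finset.mem_image]
    exact ⟨(x, y), Finset.mem_filter.mpr ⟨Finset.mem_univ _, h⟩, rfl⟩
  obtain ⟨z, hz1, hz2⟩ := PC hW EX hEXadj
  have hNPfin : (NP G S W).Finite := Set.toFinite _
  set NF : Finset V := hNPfin.toFinset with hNF
  have hNFmem : ∀ v, v ∈ NF ↔ v ∈ NP G S W := by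
    intro v; rw [hNF, Set.Finite.mem_toFinset]
  set Fib : (F0 G S W).ConnectedComponent → Finset V :=
    fun c => NF.filter (fun v => fcmp G S W v = c) with hFib
  set pick : (F0 G S W).ConnectedComponent → Finset V := fun c =>
    (z c).elim (Fib c) (fun v => if Fib c = {v} then {domtE G S W v}
        else (Fib c).erase v) with hpick
  have hpick_none : ∀ c, z c = none → pick c = Fib c := by
    intro c hc; rw [hpick]; simp only [hc, Option.elim]
  have hpick_single : ∀ c v, z c = some v → Fib c = {v} →
      pick c = {domtE G S W v} := by
    intro c v hc hs; rw [hpick]; simp only [hc, Option.elim, if_pos hs]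
  have hpick_erase : ∀ c v, z c = some v → Fib c ≠ {v} →
      pick c = (Fib c).erase v := by
    intro c v hc hs; rw [hpick]; simp only [hc, Option.elim, if_neg hs]
  -- membership structure of pick
  have hgood : ∀ c x, x ∈ pick c → fcmp G S W x = c ∧
      ((x ∈ NP G S W ∧ z c ≠ some x) ∨ x ∈ S ∩ W) := by
    intro c x hx
    rcases hzc : z c with _ | v
    · rw [hpick_none c hzc] at hx
      rw [hFib, Finset.mem_filter] at hx
      exact ⟨hx.2, Or.inl ⟨(hNFmem x).mp hx.1, by simp⟩⟩
    · have hvNP : v ∈ NP G S W := (hz1 c v hzc).2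
      have hvc : fcmp G S W v = c := (hz1 c v hzc).1
      by_cases hs : Fib c = {v}
      · rw [hpick_single c v hzc hs, Finset.mem_singleton] at hx
        subst hx
        obtain ⟨hdT, hdA⟩ := domt_spec (G := G) (S := S) (W := W) hvNP
        refine ⟨?_, Or.inr hdT⟩
        rw [← hvc]
        exact (Tadj_cmp hdT (NP_mem_W hvNP) hdA.symm)
      · rw [hpick_erase c v hzc hs, Finset.mem_erase] at hx
        obtain ⟨hxv, hxF⟩ := hx
        rw [hFib, Finset.mem_filter] at hxF
        refine ⟨hxF.2, Or.inl ⟨(hNFmem x).mp hxF.1, ?_⟩⟩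
        intro h
        apply hxv
        injection h with hvx'
        exact hvx'.symm
  set C : Finset ((F0 G S W).ConnectedComponent) := NF.image (fcmp G S W) with hC
  set I : Finset V := C.biUnion pick with hI
  have hdisj : ∀ c₁ ∈ C, ∀ c₂ ∈ C, c₁ ≠ c₂ → Disjoint (pick c₁) (pick c₂) := by
    intro c₁ _ c₂ _ hne
    rw [Finset.disjoint_left]
    intro x hx1 hx2
    exact hne ((hgood c₁ x hx1).1.symm.trans (hgood c₂ x hx2).1)
  have hFibNP : ∀ c x, x ∈ Fib c → x ∈ NP G S W ∧ fcmp G S W x = c := by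
    intro c x hx
    rw [hFib] at hx
    rw [Finset.mem_filter] at hx
    exact ⟨(hNFmem x).mp hx.1, hx.2⟩
  have hindep : ((I : Set V)).Pairwise fun u v => ¬ G.Adj u v := by
    intro x hx y hy hne hadj
    rw [Finset.mem_coe, hI, Finset.mem_biUnion] at hx hy
    obtain ⟨c, hcC, hxp⟩ := hx
    obtain ⟨c', hc'C, hyp⟩ := hy
    obtain ⟨hxc, hxk⟩ := hgood c x hxp
    obtain ⟨hyc, hyk⟩ := hgood c' y hyp
    rcases eq_or_ne c c' with rfl | hcc
    · -- same component
      rcases hzc : z c with _ | v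
      · rw [hpick_none c hzc] at hxp hyp
        obtain ⟨hxNP, -⟩ := hFibNP c x hxp
        obtain ⟨hyNP, -⟩ := hFibNP c y hyp
        exact L1 hW hxNP hyNP hne (hxc.trans hyc.symm) hadj
      · by_cases hs : Fib c = {v}
        · rw [hpick_single c v hzc hs, Finset.mem_singleton] at hxp hyp
          exact hne (hxp.trans hyp.symm)
        · rw [hpick_erase c v hzc hs] at hxp hyp
          obtain ⟨hxNP, -⟩ := hFibNP c x (Finset.mem_of_mem_erase hxp)
          obtain ⟨hyNP, -⟩ := hFibNP c y (Finset.mem_of_mem_erase hyp)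
          exact L1 hW hxNP hyNP hne (hxc.trans hyc.symm) hadj
    · have hfxy : fcmp G S W x ≠ fcmp G S W y := by
        rw [hxc, hyc]; exact hcc
      rcases hxk with ⟨hxNP, hxnz⟩ | hxT
      · rcases hyk with ⟨hyNP, hynz⟩ | hyT
        · have hX : XAdj G S W x y := ⟨hadj, hxNP, hyNP, hfxy⟩
          rcases hz2 x y (hEXfull x y hX) with h | h
          · rw [hxc] at h; exact hxnz h
          · rw [hyc] at h; exact hynz h
        · exact hfxy ((Tadj_cmp hyT (NP_mem_W hxNP) hadj.symm).symm)
      · have hyW : y ∈ W := by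
          rcases hyk with ⟨hyNP, -⟩ | hyT
          · exact NP_mem_W hyNP
          · exact hyT.2
        exact hfxy (Tadj_cmp hxT hyW hadj)
  refine ⟨I, hindep, ?_⟩
  have h1 : NF.card = ∑ c ∈ C, (Fib c).card := by
    rw [hC, hFib]
    exact Finset.card_eq_sum_card_fiberwise (fun x hx => Finset.mem_image_of_mem _ hx)
  have h2 : I.card = ∑ c ∈ C, (pick c).card := Finset.card_biUnion hdisj
  have h3 : ∀ c ∈ C, (Fib c).card ≤ 2 * (pick c).card := by
    intro c hcC
    rcases hzc : z c with _ | v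
    · rw [hpick_none c hzc]
      omega
    · by_cases hs : Fib c = {v}
      · rw [hpick_single c v hzc hs, hs]
        simp
      · rw [hpick_erase c v hzc hs]
        by_cases hv : v ∈ Fib c
        · rw [Finset.card_erase_of_mem hv]
          have h2le : 2 ≤ (Fib c).card := by
            by_contra hlt
            push_neg at hlt
            interval_cases h : (Fib c).card
            · exact (Finset.card_ne_zero_of_mem hv) h
            · obtain ⟨a, ha⟩ := Finset.card_eq_one.mp h
              apply hs
              rw [ha] at hv ⊢
              rw [Finset.mem_singleton] at hv
              rw [hv]
          omega
        · rw [Finset.erase_eq_of_notMem hv]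
          omega
  have hsum : ∑ c ∈ C, (Fib c).card ≤ ∑ c ∈ C, 2 * (pick c).card :=
    Finset.sum_le_sum h3
  rw [← Finset.mul_sum] at hsum
  have hNP : (NP G S W).ncard = NF.card := by
    rw [hNF]
    exact Set.ncard_eq_toFinset_card _ hNPfin
  omega

end
end SF

/-- The set `S_{≤1}` of vertices of `W` that belong to `S ∩ W` or have a `G`-neighbor
in `S ∩ W`. -/
def sle1 {V : Type*} (G : SimpleGraph V) (S W : Set V) : Set V :=
  {v | v ∈ W ∧ (v ∈ S ∩ W ∨ ∃ u ∈ S ∩ W, G.Adj v u)}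

/-- If every independent set of `G` has at most `d` vertices, `W` is an
`S`-forest of `G` with `1 ≤ |S ∩ W| ≤ 2d - 2`, then `|S_{≤1}| ≤ 4d - 2`. -/
theorem stmt2 {V : Type*} [Fintype V] (G : SimpleGraph V) (d : ℕ)
    (hα : ∀ I : Set V, I.Pairwise (fun u v => ¬ G.Adj u v) → I.ncard ≤ d)
    (S W : Set V) (hW : SForest G S W)
    (h1 : 1 ≤ (S ∩ W).ncard) (h2 : (S ∩ W).ncard ≤ 2 * d - 2) :
    (sle1 G S W).ncard ≤ 4 * d - 2 := by
  classical
  have hW' : SF.SForest' G S W := hW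
  obtain ⟨I, hind, hcount⟩ := SF.core (G := G) (S := S) (W := W) hW'
  have hId : I.card ≤ d := by
    have := hα (I : Set V) hind
    rwa [Set.ncard_coe_finset] at this
  have hNP2d : (SF.NP G S W).ncard ≤ 2 * d := by
    have h2d : 2 * I.card ≤ 2 * d := Nat.mul_le_mul_left 2 hId
    omega
  have hd1 : 1 ≤ d := by
    have hne := Set.nonempty_of_ncard_ne_zero (by omega : (S ∩ W).ncard ≠ 0)
    obtain ⟨x, hx⟩ := hne
    have := hα {x} (Set.pairwise_singleton _ _)
    rwa [Set.ncard_singleton] at this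
  have hsub : sle1 G S W ⊆ (S ∩ W) ∪ SF.NP G S W := by
    intro v hv
    obtain ⟨hvW, hv2⟩ := hv
    by_cases hvS : v ∈ S
    · exact Or.inl ⟨hvS, hvW⟩
    · rcases hv2 with h | ⟨u, huSW, hadj⟩
      · exact absurd h.1 hvS
      · exact Or.inr ⟨hvW, hvS, u, huSW, hadj⟩
  have hle := Set.ncard_le_ncard hsub (Set.toFinite _)
  have hun := Set.ncard_union_le (S ∩ W) (SF.NP G S W)
  omega
end

section
/- Let G be a simple graph with independence number at most d, let S be a set of vertices of G, and let W be an S-forest of G with |S ∩ W| ≥ 2d − 1. Let S_{≤1} be the set of vertices of W that belong to S ∩ W or have a G-neighbor in S ∩ W. Then |S_{≤1}| ≤ 2d. -/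
open SimpleGraph Finset

private lemma unique_edge_at_start {V' : Type*} {H : SimpleGraph V'} {u v x y : V'}
    {p : H.Walk u v} (hp : p.IsPath)
    (hx : s(x, u) ∈ p.edges) (hy : s(y, u) ∈ p.edges) : x = y := by
  cases p with
  | nil => simp at hx
  | @cons _ w _ h' q =>
    have hu : u ∉ q.support := ((SimpleGraph.Walk.cons_isPath_iff h' q).1 hp).2
    simp only [SimpleGraph.Walk.edges_cons, List.mem_cons] at hx hy
    have hhead : ∀ z : V', s(z, u) = s(u, w) → z = w := by
      intro z hz
      rw [Sym2.eq_iff] at hz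
      rcases hz with ⟨hz1, hz2⟩ | ⟨hz1, _⟩
      · exact absurd (hz2 ▸ h') (by rw [hz2] at h'; exact absurd h' (H.irrefl))
      · exact hz1
    rcases hx with hx | hx
    · rcases hy with hy | hy
      · rw [hhead x hx, hhead y hy]
      · exact absurd (q.snd_mem_support_of_mem_edges hy) hu
    · exact absurd (q.snd_mem_support_of_mem_edges hx) hu

private lemma exists_leaf {V' : Type*} [Fintype V'] (H : SimpleGraph V') [DecidableRel H.Adj]
    [DecidableEq V'] (B : Finset V')
    (hac : ∀ (u : V') (c : H.Walk u u), c.IsCycle → ¬ ∀ x ∈ c.support, x ∈ B)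
    (hne : B.Nonempty) :
    ∃ u ∈ B, (B.filter (H.Adj u)).card ≤ 1 := by
  classical
  let P : Set ℕ := {n | ∃ (u v : V') (p : H.Walk u v),
    p.IsPath ∧ (∀ x ∈ p.support, x ∈ B) ∧ p.length = n}
  obtain ⟨u0, hu0⟩ := hne
  have hP0 : (0 : ℕ) ∈ P := ⟨u0, u0, SimpleGraph.Walk.nil, by simp, by simpa using hu0, rfl⟩
  have hbd : ∀ n ∈ P, n < Fintype.card V' := by
    rintro n ⟨u, v, p, hp, -, rfl⟩; exact hp.length_lt
  have hPfin : P.Finite := Set.Finite.subset (Set.finite_Iio _) (fun n hn => hbd n hn)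
  obtain ⟨N, hNP, hNmax'⟩ := Set.Finite.exists_maximalFor id P hPfin (Set.nonempty_of_mem hP0)
  have hNmax : ∀ m ∈ P, m ≤ N := by
    intro m hm
    rcases le_total m N with h | h
    · exact h
    · exact hNmax' hm h
  obtain ⟨u, v, p, hp, hsupp, hlen⟩ := hNP
  refine ⟨u, hsupp u p.start_mem_support, ?_⟩
  by_contra hcard
  push_neg at hcard
  obtain ⟨a, ha, b, hb, hab⟩ := Finset.one_lt_card.1 hcard
  have hnb : ∀ x ∈ B.filter (H.Adj u), x ∈ p.support := by
    intro x hx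
    rw [Finset.mem_filter] at hx
    by_contra hxs
    have hpath : (SimpleGraph.Walk.cons (H.adj_symm hx.2) p).IsPath := hp.cons hxs
    have hP : p.length + 1 ∈ P := by
      refine ⟨x, v, _, hpath, ?_, by simp⟩
      intro y hy
      rw [SimpleGraph.Walk.support_cons, List.mem_cons] at hy
      rcases hy with rfl | hy
      · exact hx.1
      · exact hsupp y hy
    have := hNmax _ hP; omega
  have key : ∀ x ∈ B.filter (H.Adj u), s(x, u) ∉ p.edges → False := by
    intro x hx hxe
    rw [Finset.mem_filter] at hx
    have hxsupp := hnb x (Finset.mem_filter.2 hx)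
    have hqp : (p.takeUntil x hxsupp).IsPath := hp.takeUntil hxsupp
    have hcyc : (SimpleGraph.Walk.cons (H.adj_symm hx.2) (p.takeUntil x hxsupp)).IsCycle := by
      rw [SimpleGraph.Walk.cons_isCycle_iff]
      exact ⟨hqp, fun hc => hxe (p.edges_takeUntil_subset hxsupp hc)⟩
    refine hac x _ hcyc ?_
    intro y hy
    rw [SimpleGraph.Walk.support_cons, List.mem_cons] at hy
    rcases hy with rfl | hy
    · exact hx.1
    · exact hsupp y (p.support_takeUntil_subset hxsupp hy)
  have hae : s(a, u) ∈ p.edges := by by_contra hc; exact key a ha hc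
  have hbe : s(b, u) ∈ p.edges := by by_contra hc; exact key b hb hc
  exact hab (unique_edge_at_start hp hae hbe)

private lemma forest_indep {V' : Type*} [Fintype V'] (H : SimpleGraph V') [DecidableRel H.Adj]
    [DecidableEq V'] :
    ∀ (n : ℕ) (B : Finset V'), B.card ≤ n →
    (∀ (u : V') (c : H.Walk u u), c.IsCycle → ¬ ∀ x ∈ c.support, x ∈ B) →
    ∃ I : Finset V', I ⊆ B ∧ (↑I : Set V').Pairwise (fun a b => ¬ H.Adj a b) ∧
      B.card ≤ 2 * I.card := by
  intro n
  induction n with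
  | zero => exact fun B hB _ => ⟨∅, by simp, by simp, by simpa using hB⟩
  | succ n ih =>
    intro B hB hac
    rcases B.eq_empty_or_nonempty with rfl | hne
    · exact ⟨∅, by simp, by simp, by simp⟩
    obtain ⟨u, huB, hdeg⟩ := exists_leaf H B hac hne
    have hnotadj : ∀ B' : Finset V', B' ⊆ B.erase u →
        (∀ x ∈ B.filter (H.Adj u), x ∉ B') →
        B'.card ≤ n →
        ∃ I : Finset V', I ⊆ B ∧ (↑I : Set V').Pairwise (fun a b => ¬ H.Adj a b) ∧
          B'.card + 2 ≤ 2 * I.card ∧ u ∈ I := by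
      intro B' hB'sub hB'nb hB'card
      obtain ⟨I, hIB, hIind, hIcard⟩ := ih B' hB'card (by
        intro w c hc hsup
        exact hac w c hc fun x hx => (B.erase_subset u) (hB'sub (hsup x hx)))
      have huI : u ∉ I := fun hc => (Finset.notMem_erase u B) (hB'sub (hIB hc))
      have hunadj : ∀ x ∈ I, ¬ H.Adj u x := by
        intro x hxI hadj
        exact hB'nb x (Finset.mem_filter.2 ⟨(B.erase_subset u) (hB'sub (hIB hxI)), hadj⟩)
          (hIB hxI)
      refine ⟨insert u I, ?_, ?_, ?_, Finset.mem_insert_self u I⟩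
      · exact Finset.insert_subset huB (hIB.trans ((hB'sub).trans (B.erase_subset u)))
      · intro x hx y hy hxy
        simp only [Finset.coe_insert, Set.mem_insert_iff, Finset.mem_coe] at hx hy
        rcases hx with rfl | hx
        · rcases hy with rfl | hy
          · exact absurd rfl hxy
          · exact hunadj y hy
        · rcases hy with rfl | hy
          · exact fun hadj => hunadj x hx (H.adj_symm hadj)
          · exact hIind hx hy hxy
      · rw [Finset.card_insert_of_notMem huI]; omega
    by_cases h0 : (B.filter (H.Adj u)).card = 0
    · have hBcard : B.card = (B.erase u).card + 1 := by
        rw [Finset.card_erase_of_mem huB]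
        have := Finset.card_pos.2 ⟨u, huB⟩
        omega
      obtain ⟨I, hIB, hIind, hIcard, -⟩ := hnotadj (B.erase u) (le_refl _)
        (by intro x hx; rw [Finset.card_eq_zero.1 h0] at hx; simp at hx)
        (by have := Finset.card_erase_of_mem huB; omega)
      exact ⟨I, hIB, hIind, by omega⟩
    · have h1 : (B.filter (H.Adj u)).card = 1 := by omega
      obtain ⟨w, hw⟩ := Finset.card_eq_one.1 h1
      have hwB : w ∈ B.filter (H.Adj u) := by rw [hw]; exact Finset.mem_singleton_self w
      rw [Finset.mem_filter] at hwB
      have hwu : w ≠ u := fun hc => H.irrefl (hc ▸ hwB.2)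
      have hwerase : w ∈ B.erase u := Finset.mem_erase.2 ⟨hwu, hwB.1⟩
      have hBcard : B.card = ((B.erase u).erase w).card + 2 := by
        have e1 := Finset.card_erase_of_mem hwerase
        have e2 := Finset.card_erase_of_mem huB
        have h3' : 0 < (B.erase u).card := Finset.card_pos.2 ⟨w, hwerase⟩
        have h4' : 0 < B.card := Finset.card_pos.2 ⟨u, huB⟩
        omega
      obtain ⟨I, hIB, hIind, hIcard, -⟩ := hnotadj ((B.erase u).erase w)
        (Finset.erase_subset w (B.erase u))
        (by
          intro x hx hxmem
          rw [hw, Finset.mem_singleton] at hx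
          exact (Finset.notMem_erase w _) (hx ▸ hxmem))
        (by
          have := Finset.card_erase_le (s := B.erase u) (a := w)
          rw [Finset.card_erase_of_mem huB] at *
          omega)
      exact ⟨I, hIB, hIind, by omega⟩

/-- If every independent set of `G` has at most `d` vertices, `W` is an
`S`-forest of `G` with `|S ∩ W| ≥ 2d - 1`, then `|S_{≤1}| ≤ 2d`. -/
theorem stmt3 {V : Type*} [Fintype V] (G : SimpleGraph V) (d : ℕ)
    (hα : ∀ I : Set V, I.Pairwise (fun u v => ¬ G.Adj u v) → I.ncard ≤ d)
    (S W : Set V) (hW : SForest G S W)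
    (h : 2 * d - 1 ≤ (S ∩ W).ncard) :
    (sle1 G S W).ncard ≤ 2 * d := by
  classical
  have hWfin : Finite ↥W := Set.toFinite W
  haveI : Fintype ↥W := Fintype.ofFinite _
  let A : Finset ↥W := Finset.univ.filter (fun v => (v : V) ∈ S)
  have hAcard : A.card = (S ∩ W).ncard := by
    have himg : Subtype.val '' (↑A : Set ↥W) = S ∩ W := by
      ext x
      constructor
      · rintro ⟨v, hv, rfl⟩
        simp only [Finset.coe_filter, Set.mem_setOf_eq, A, Finset.mem_univ, true_and] at hv
        exact ⟨hv, v.2⟩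
      · rintro ⟨hxS, hxW⟩
        exact ⟨⟨x, hxW⟩, by simp [A, hxS], rfl⟩
    calc A.card = (↑A : Set ↥W).ncard := (Set.ncard_coe_finset A).symm
      _ = (Subtype.val '' (↑A : Set ↥W)).ncard :=
          (Set.ncard_image_of_injective _ Subtype.val_injective).symm
      _ = (S ∩ W).ncard := by rw [himg]
  let T : Finset ↥W := Finset.univ.filter (fun v => (v : V) ∈ sle1 G S W)
  have hTcard : T.card = (sle1 G S W).ncard := by
    have himg : Subtype.val '' (↑T : Set ↥W) = sle1 G S W := by
      ext x
      constructor
      · rintro ⟨v, hv, rfl⟩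
        simp only [Finset.coe_filter, Set.mem_setOf_eq, T, Finset.mem_univ, true_and] at hv
        exact hv
      · intro hx
        exact ⟨⟨x, hx.1⟩, by simp [T, hx], rfl⟩
    calc T.card = (↑T : Set ↥W).ncard := (Set.ncard_coe_finset T).symm
      _ = (Subtype.val '' (↑T : Set ↥W)).ncard :=
          (Set.ncard_image_of_injective _ Subtype.val_injective).symm
      _ = (sle1 G S W).ncard := by rw [himg]
  have hAT : A ⊆ T := by
    intro v hv
    simp only [Finset.mem_filter, Finset.mem_univ, true_and, A, T] at hv ⊢
    exact ⟨v.2, Or.inl ⟨hv, v.2⟩⟩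
  have hindep : ∀ I : Finset ↥W,
      (↑I : Set ↥W).Pairwise (fun a b => ¬ (G.induce W).Adj a b) → I.card ≤ d := by
    intro I hI
    have hpair : (Subtype.val '' (↑I : Set ↥W)).Pairwise (fun u v => ¬ G.Adj u v) := by
      rintro x ⟨a, ha, rfl⟩ y ⟨b, hb, rfl⟩ hxy
      have hab : a ≠ b := fun hc => hxy (by rw [hc])
      have := hI ha hb hab
      intro hadj
      exact this (by simpa using hadj)
    have := hα _ hpair
    rwa [Set.ncard_image_of_injective _ Subtype.val_injective, Set.ncard_coe_finset] at this
  rw [← hTcard]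
  by_contra hT
  push_neg at hT
  have hA2d1 : 2 * d - 1 ≤ A.card := hAcard ▸ h
  obtain ⟨B, hBT, hABsmall, hBcard⟩ :
      ∃ B : Finset ↥W, B ⊆ T ∧ (B \ A).card ≤ 2 ∧ B.card = 2 * d + 1 := by
    by_cases hk : 2 * d + 1 ≤ A.card
    · obtain ⟨B, hBA, hBc⟩ := Finset.exists_subset_card_eq hk
      refine ⟨B, hBA.trans hAT, ?_, hBc⟩
      rw [Finset.sdiff_eq_empty_iff_subset.2 hBA]
      simp
    · push_neg at hk
      have hsd : 2 * d + 1 - A.card ≤ (T \ A).card := by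
        rw [Finset.card_sdiff_of_subset hAT]; omega
      obtain ⟨E, hE, hEc⟩ := Finset.exists_subset_card_eq hsd
      refine ⟨A ∪ E, Finset.union_subset hAT (hE.trans Finset.sdiff_subset), ?_, ?_⟩
      · have hsub : (A ∪ E) \ A ⊆ E := by
          intro x hx
          rw [Finset.mem_sdiff, Finset.mem_union] at hx
          tauto
        have := Finset.card_le_card hsub
        omega
      · have hdisj : Disjoint A E := by
          refine Finset.disjoint_left.2 fun x hxA hxE => ?_
          exact (Finset.mem_sdiff.1 (hE hxE)).2 hxA
        rw [Finset.card_union_of_disjoint hdisj]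
        omega
  have hacB : ∀ (u : ↥W) (c : (G.induce W).Walk u u), c.IsCycle →
      ¬ ∀ x ∈ c.support, x ∈ B := by
    intro u c hc hsupp
    have h3 : 3 ≤ c.length := hc.three_le_length
    have hnodup : c.support.tail.Nodup := hc.support_nodup
    have hlen : c.support.tail.length = c.length := by
      have := c.length_support
      have := List.length_tail (l := c.support)
      omega
    set s : Finset ↥W := c.support.tail.toFinset with hs
    have hscard : 3 ≤ s.card := by
      rw [hs, List.toFinset_card_of_nodup hnodup]
      omega
    have hsB : s ⊆ B := fun x hx => hsupp x (List.tail_subset _ (List.mem_toFinset.1 hx))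
    by_cases hsA : ∃ x ∈ s, x ∈ A
    · obtain ⟨x, hxs, hxA⟩ := hsA
      have hxS : (x : V) ∈ S := by
        simpa [A] using hxA
      exact hW u c hc x (List.tail_subset _ (List.mem_toFinset.1 hxs)) hxS
    · push_neg at hsA
      have hsub : s ⊆ B \ A := fun x hx => Finset.mem_sdiff.2 ⟨hsB hx, fun hxa => hsA x hx hxa⟩
      have := Finset.card_le_card hsub
      omega
  obtain ⟨I, hIB, hIindep, hIcard⟩ := forest_indep (G.induce W) (2 * d + 1) B (by omega) hacB
  have := hindep I hIindep
  omega
end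

section
/- Let G be a simple graph, S a set of vertices of G, and W an S-forest of G with S ∩ W ≠ ∅. Let S_{≤1} be the set of vertices of W that belong to S ∩ W or have a G-neighbor in S ∩ W, let C_1, …, C_{d'} be the connected components of the induced subgraph G[W ∖ S_{≤1}], and for each i let A_i = N_G(C_i) ∩ S_{≤1}. Then the graph Ĝ obtained from the induced subgraph G[S_{≤1}] by adding d' new vertices w_1, …, w_{d'}, where each w_i is adjacent exactly to the vertices of A_i, contains no cycle passing through a vertex of S. -/
/-- The graph `Ĝ` obtained from the induced subgraph `G[S_{≤1}]` by adding, for each connected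
component `C` of `G[W ∖ S_{≤1}]`, one new vertex adjacent exactly to the vertices of
`N_G(C) ∩ S_{≤1}` (i.e. to the vertices `u ∈ S_{≤1}` having a `G`-neighbor in `C`). -/
def hatGraph {V : Type*} (G : SimpleGraph V) (S W : Set V) :
    SimpleGraph (↥(sle1 G S W) ⊕ (G.induce (W \ sle1 G S W)).ConnectedComponent) :=
  SimpleGraph.fromRel fun a b =>
    match a, b with
    | Sum.inl u, Sum.inl v => G.Adj (u : V) (v : V)
    | Sum.inl u, Sum.inr c => ∃ x : ↥(W \ sle1 G S W),
        (G.induce (W \ sle1 G S W)).connectedComponentMk x = c ∧ G.Adj (x : V) (u : V)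
    | _, _ => False


open SimpleGraph Walk

section hat
variable {V : Type*} {G : SimpleGraph V} {S W : Set V}

lemma hat_adj_inl_inl {u v : ↥(sle1 G S W)} (h : (hatGraph G S W).Adj (Sum.inl u) (Sum.inl v)) :
    G.Adj (u : V) (v : V) := by
  rw [hatGraph, SimpleGraph.fromRel_adj] at h
  rcases h.2 with h' | h'
  · exact h'
  · exact h'.symm

lemma hat_adj_inl_inr {u : ↥(sle1 G S W)} {k} (h : (hatGraph G S W).Adj (Sum.inl u) (Sum.inr k)) :
    ∃ x : ↥(W \ sle1 G S W), (G.induce (W \ sle1 G S W)).connectedComponentMk x = k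
      ∧ G.Adj (x : V) (u : V) := by
  rw [hatGraph, SimpleGraph.fromRel_adj] at h
  rcases h.2 with h' | h'
  · exact h'
  · exact h'.elim

lemma hat_not_adj_inr_inr {k k'} : ¬ (hatGraph G S W).Adj (Sum.inr k) (Sum.inr k') := by
  rw [hatGraph, SimpleGraph.fromRel_adj]
  rintro ⟨-, h | h⟩ <;> exact h

end hat

section auxlemmas
variable {V : Type*} {G : SimpleGraph V}

variable {V : Type*} {G : SimpleGraph V}

lemma edge_not_mem_of_isPath {v u : V} (r : G.Walk v u) (hr : r.IsPath) (hl : 2 ≤ r.length) :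
    s(u, v) ∉ r.edges := by
  intro he
  cases r with
  | nil => simp at he
  | @cons _ x _ h' r' =>
    rw [Walk.edges_cons, List.mem_cons] at he
    rw [Walk.cons_isPath_iff] at hr
    rcases he with he | he
    · rw [Sym2.eq_iff] at he
      rcases he with ⟨hu, hv⟩ | ⟨hu, -⟩
      · exact hr.2 (hu ▸ r'.end_mem_support)
      · subst hu
        cases r' with
        | nil => simp at hl
        | cons h'' r'' =>
          rw [Walk.cons_isPath_iff] at hr
          exact hr.1.2 r''.end_mem_support
    · exact hr.2 (r'.snd_mem_support_of_mem_edges he)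

lemma isCycle_of_tail_nodup {u : V} (q : G.Walk u u)
    (h3 : 3 ≤ q.length) (hn : q.support.tail.Nodup) : q.IsCycle := by
  cases q with
  | nil => simp at h3
  | cons h r =>
    rw [Walk.cons_isCycle_iff]
    have hr : r.IsPath := by rw [Walk.isPath_def]; simpa using hn
    refine ⟨hr, edge_not_mem_of_isPath r hr ?_⟩
    simp only [Walk.length_cons] at h3; omega

lemma reachable_of_mem_support {a b c : V} (p : G.Walk a b) (h : c ∈ p.support) :
    G.Reachable a c := by
  induction p with
  | nil => simp at h; subst h; rfl
  | cons h' p ih =>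
    rw [Walk.support_cons, List.mem_cons] at h
    rcases h with h | h
    · subst h; rfl
    · exact (h'.reachable).trans (ih h)

end auxlemmas

section main
variable {V : Type*} (G : SimpleGraph V) (S W : Set V)

open Classical in
noncomputable def phi (z : ↥W) :
    ↥(sle1 G S W) ⊕ (G.induce (W \ sle1 G S W)).ConnectedComponent :=
  if h : z.1 ∈ sle1 G S W then Sum.inl ⟨z.1, h⟩
  else Sum.inr ((G.induce (W \ sle1 G S W)).connectedComponentMk ⟨z.1, ⟨z.2, h⟩⟩)

variable {G S W}

lemma phi_sle1 {z : ↥W} (hz : z.1 ∈ sle1 G S W) : phi G S W z = Sum.inl ⟨z.1, hz⟩ := by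
  simp [phi, hz]

lemma phi_diff {z : ↥W} (hz : z.1 ∉ sle1 G S W) :
    phi G S W z = Sum.inr ((G.induce (W \ sle1 G S W)).connectedComponentMk ⟨z.1, ⟨z.2, hz⟩⟩) := by
  simp [phi, hz]

lemma main_lemma : ∀ (n : ℕ) (u v : ↥(sle1 G S W))
    (p : (hatGraph G S W).Walk (Sum.inl u) (Sum.inl v)),
    p.length ≤ n → p.support.Nodup →
    ∃ q : (G.induce W).Walk ⟨u.1, u.2.1⟩ ⟨v.1, v.2.1⟩,
      q.IsPath ∧ p.length ≤ q.length ∧ ∀ z ∈ q.support, phi G S W z ∈ p.support := by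
  intro n
  induction n with
  | zero =>
    intro u v p hlen hnd
    cases p with
    | nil =>
      refine ⟨Walk.nil, Walk.IsPath.nil, le_refl _, ?_⟩
      intro z hz
      simp only [Walk.support_nil, List.mem_singleton] at hz
      subst hz
      rw [phi_sle1 u.2]
      simp
    | cons h rest => simp at hlen
  | succ m ih =>
    intro u v p hlen hnd
    cases p with
    | nil =>
      refine ⟨Walk.nil, Walk.IsPath.nil, by simp, ?_⟩
      intro z hz
      simp only [Walk.support_nil, List.mem_singleton] at hz
      subst hz
      rw [phi_sle1 u.2]
      simp
    | @cons _ b _ h rest =>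
      rw [Walk.support_cons, List.nodup_cons] at hnd
      cases b with
      | inl w =>
        have huw : G.Adj (u : V) (w : V) := hat_adj_inl_inl h
        obtain ⟨q', hq'p, hq'l, hq'm⟩ := ih w v rest (by
          simp only [Walk.length_cons] at hlen; omega) hnd.2
        have hadj : (G.induce W).Adj ⟨u.1, u.2.1⟩ ⟨w.1, w.2.1⟩ := huw
        refine ⟨Walk.cons hadj q', ?_, ?_, ?_⟩
        · rw [Walk.cons_isPath_iff]
          refine ⟨hq'p, fun hmem => ?_⟩
          have := hq'm _ hmem
          rw [phi_sle1 u.2] at this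
          simp only [Subtype.coe_eta] at this
          exact hnd.1 this
        · simp only [Walk.length_cons]; omega
        · intro z hz
          rw [Walk.support_cons, List.mem_cons] at hz
          rcases hz with hz | hz
          · subst hz
            rw [phi_sle1 u.2]
            simp
          · rw [Walk.support_cons, List.mem_cons]
            exact Or.inr (hq'm z hz)
      | inr k =>
        obtain ⟨x, hxk, hxu⟩ := hat_adj_inl_inr h
        cases rest with
        | @cons _ b₂ _ h₂ rest₂ =>
          cases b₂ with
          | inr k₂ => exact absurd h₂ hat_not_adj_inr_inr
          | inl w =>
            obtain ⟨y, hyk, hyw⟩ := hat_adj_inl_inr h₂.symm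
            classical
            have hnd1 : Sum.inl u ∉ (Walk.cons h₂ rest₂).support := hnd.1
            have hnd2 := hnd.2
            rw [Walk.support_cons, List.nodup_cons] at hnd2
            rw [Walk.support_cons, List.mem_cons] at hnd1
            push_neg at hnd1
            obtain ⟨q₂, hq₂p, hq₂l, hq₂m⟩ := ih w v rest₂ (by
              simp only [Walk.length_cons] at hlen; omega) hnd2.2
            have hxy : (G.induce (W \ sle1 G S W)).Reachable x y :=
              SimpleGraph.ConnectedComponent.exact (hxk.trans hyk.symm)
            obtain ⟨r₀⟩ := hxy
            have hr₁p : r₀.bypass.IsPath := r₀.bypass_isPath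
            set r₁ := r₀.bypass with hr₁def
            set f := G.induceHomOfLE (Set.diff_subset : W \ sle1 G S W ⊆ W) with hfdef
            set r := r₁.map f.toHom with hrdef
            have hrp : r.IsPath := r₁.map_isPath_of_injective f.injective hr₁p
            have hrsup : ∀ z ∈ r.support, ∃ hz : (z : V) ∈ W \ sle1 G S W,
                (G.induce (W \ sle1 G S W)).connectedComponentMk ⟨z.1, hz⟩ = k := by
              intro z hz
              rw [hrdef, Walk.support_map, List.mem_map] at hz
              obtain ⟨z₀, hz₀, rfl⟩ := hz
              refine ⟨z₀.2, ?_⟩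
              have hreach : (G.induce (W \ sle1 G S W)).Reachable x z₀ :=
                reachable_of_mem_support r₁ hz₀
              exact (SimpleGraph.ConnectedComponent.sound hreach.symm).trans hxk
            have hadj_ux : (G.induce W).Adj ⟨u.1, u.2.1⟩ ⟨x.1, x.2.1⟩ := hxu.symm
            have hadj_yw : (G.induce W).Adj ⟨y.1, y.2.1⟩ ⟨w.1, w.2.1⟩ := hyw
            have hrend : r = r₁.map f.toHom := hrdef
            -- r : Walk (f x) (f y); these are defeq to ⟨x.1, x.2.1⟩ and ⟨y.1, y.2.1⟩
            let q : (G.induce W).Walk ⟨u.1, u.2.1⟩ ⟨v.1, v.2.1⟩ :=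
              Walk.cons hadj_ux (r.append (Walk.cons hadj_yw q₂))
            have hsup : q.support = ⟨u.1, u.2.1⟩ :: (r.support ++ q₂.support) := by
              show (Walk.cons hadj_ux (r.append (Walk.cons hadj_yw q₂))).support = _
              exact congrArg _ (Walk.support_append _ _)
            have hur : (⟨u.1, u.2.1⟩ : ↥W) ∉ r.support := by
              intro hmem
              obtain ⟨hz, -⟩ := hrsup _ hmem
              exact hz.2 u.2
            have hphir : ∀ z ∈ r.support, phi G S W z = Sum.inr k := by
              intro z hz
              obtain ⟨hzD, hzk⟩ := hrsup _ hz
              rw [phi_diff hzD.2]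
              congr 1
            have huq₂ : (⟨u.1, u.2.1⟩ : ↥W) ∉ q₂.support := by
              intro hmem
              have := hq₂m _ hmem
              rw [phi_sle1 u.2] at this
              simp only [Subtype.coe_eta] at this
              exact hnd1.2 this
            have hdisj : ∀ z, z ∈ r.support → z ∈ q₂.support → False := by
              intro z hz₁ hz₂
              have h1 := hphir _ hz₁
              have h2 := hq₂m _ hz₂
              rw [h1] at h2
              exact hnd2.1 h2
            refine ⟨q, ?_, ?_, ?_⟩
            · rw [Walk.isPath_def, hsup, List.nodup_cons, List.nodup_append]
              refine ⟨?_, hrp.support_nodup, hq₂p.support_nodup, ?_⟩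
              · rw [List.mem_append]
                rintro (hmem | hmem)
                · exact hur hmem
                · exact huq₂ hmem
              · intro z hz₁ z' hz₂ hzz
                subst hzz
                exact hdisj z hz₁ hz₂
            · show (Walk.cons h (Walk.cons h₂ rest₂)).length
                ≤ (Walk.cons hadj_ux (r.append (Walk.cons hadj_yw q₂))).length
              have key : (Walk.cons hadj_ux (r.append (Walk.cons hadj_yw q₂))).length
                  = r.length + (q₂.length + 1) + 1 :=
                congrArg (· + 1) (Walk.length_append _ _)
              have key2 : (Walk.cons h (Walk.cons h₂ rest₂)).length = rest₂.length + 1 + 1 := rfl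
              exact le_of_eq_of_le key2 (le_of_le_of_eq (by omega) key.symm)
            · intro z hz
              rw [hsup, List.mem_cons] at hz
              rcases hz with hz | hz
              · subst hz
                rw [phi_sle1 u.2]
                simp
              · rw [List.mem_append] at hz
                simp only [Walk.support_cons, List.mem_cons]
                rcases hz with hz | hz
                · rw [hphir _ hz]
                  exact Or.inr (Or.inl rfl)
                · exact Or.inr (Or.inr (hq₂m _ hz))

end main


/-- Let `W` be an `S`-forest of `G` with `S ∩ W ≠ ∅`. Then the graph `Ĝ`
obtained from `G[S_{≤1}]` by adding one new vertex per connected component `C_i` of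
`G[W ∖ S_{≤1}]`, adjacent exactly to the vertices of `A_i = N_G(C_i) ∩ S_{≤1}`, contains no
cycle passing through a vertex of `S`. -/
theorem stmt4 {V : Type*} (G : SimpleGraph V) (S W : Set V)
    (hW : SForest G S W) (hne : (S ∩ W).Nonempty) :
    ∀ (a) (c : (hatGraph G S W).Walk a a), c.IsCycle →
      ∀ b ∈ c.support, ∀ u : ↥(sle1 G S W), b = Sum.inl u → (u : V) ∉ S := by
  classical
  intro a c hc b hb u hbu
  subst hbu
  have hc' : ((c.rotate _ hb)).IsCycle := hc.rotate hb
  generalize c.rotate _ hb = c' at hc'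
  have hlen3 := hc'.three_le_length
  have hnd := hc'.support_nodup
  cases c' with
  | nil => simp at hlen3
  | @cons _ b₁ _ h p =>
    rw [Walk.support_cons, List.tail_cons] at hnd
    simp only [Walk.length_cons] at hlen3
    cases b₁ with
    | inl w =>
      have huw : G.Adj (u : V) (w : V) := hat_adj_inl_inl h
      obtain ⟨q, hqp, hql, hqm⟩ := main_lemma p.length w u p le_rfl hnd
      have hadj : (G.induce W).Adj ⟨u.1, u.2.1⟩ ⟨w.1, w.2.1⟩ := huw
      have hcyc : (Walk.cons hadj q).IsCycle := by
        apply isCycle_of_tail_nodup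
        · rw [Walk.length_cons]; omega
        · rw [Walk.support_cons, List.tail_cons]
          exact hqp.support_nodup
      exact hW ⟨u.1, u.2.1⟩ (Walk.cons hadj q) hcyc _ (Walk.start_mem_support _)
    | inr k =>
      obtain ⟨x, hxk, hxu⟩ := hat_adj_inl_inr h
      cases p with
      | @cons _ b₂ _ h₂ rest₂ =>
        cases b₂ with
        | inr k₂ => exact absurd h₂ hat_not_adj_inr_inr
        | inl w =>
          obtain ⟨y, hyk, hyw⟩ := hat_adj_inl_inr h₂.symm
          rw [Walk.support_cons, List.nodup_cons] at hnd
          simp only [Walk.length_cons] at hlen3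
          obtain ⟨q₂, hq₂p, hq₂l, hq₂m⟩ := main_lemma rest₂.length w u rest₂ le_rfl hnd.2
          have hxy : (G.induce (W \ sle1 G S W)).Reachable x y :=
            SimpleGraph.ConnectedComponent.exact (hxk.trans hyk.symm)
          obtain ⟨r₀⟩ := hxy
          have hr₁p : r₀.bypass.IsPath := r₀.bypass_isPath
          set r₁ := r₀.bypass with hr₁def
          set f := G.induceHomOfLE (Set.diff_subset : W \ sle1 G S W ⊆ W) with hfdef
          set r := r₁.map f.toHom with hrdef
          have hrp : r.IsPath := r₁.map_isPath_of_injective f.injective hr₁p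
          have hrsup : ∀ z ∈ r.support, ∃ hz : (z : V) ∈ W \ sle1 G S W,
              (G.induce (W \ sle1 G S W)).connectedComponentMk ⟨z.1, hz⟩ = k := by
            intro z hz
            rw [hrdef, Walk.support_map, List.mem_map] at hz
            obtain ⟨z₀, hz₀, rfl⟩ := hz
            refine ⟨z₀.2, ?_⟩
            have hreach : (G.induce (W \ sle1 G S W)).Reachable x z₀ :=
              reachable_of_mem_support r₁ hz₀
            exact (SimpleGraph.ConnectedComponent.sound hreach.symm).trans hxk
          have hphir : ∀ z ∈ r.support, phi G S W z = Sum.inr k := by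
            intro z hz
            obtain ⟨hzD, hzk⟩ := hrsup _ hz
            rw [phi_diff hzD.2]
            congr 1
          have hadj_ux : (G.induce W).Adj ⟨u.1, u.2.1⟩ ⟨x.1, x.2.1⟩ := hxu.symm
          have hadj_yw : (G.induce W).Adj ⟨y.1, y.2.1⟩ ⟨w.1, w.2.1⟩ := hyw
          have hur : (⟨u.1, u.2.1⟩ : ↥W) ∉ r.support := by
            intro hmem
            obtain ⟨hz, -⟩ := hrsup _ hmem
            exact hz.2 u.2
          have hdisj : ∀ z, z ∈ r.support → z ∈ q₂.support → False := by
            intro z hz₁ hz₂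
            have h1 := hphir _ hz₁
            have h2 := hq₂m _ hz₂
            rw [h1] at h2
            exact hnd.1 h2
          have hcyc : (Walk.cons hadj_ux (r.append (Walk.cons hadj_yw q₂))).IsCycle := by
            apply isCycle_of_tail_nodup
            · have key : (Walk.cons hadj_ux (r.append (Walk.cons hadj_yw q₂))).length
                  = r.length + (q₂.length + 1) + 1 :=
                congrArg (· + 1) (Walk.length_append _ _)
              exact le_of_le_of_eq (by omega) key.symm
            · have hs : (Walk.cons hadj_ux (r.append (Walk.cons hadj_yw q₂))).support.tail
                  = r.support ++ q₂.support := Walk.support_append _ _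
              exact (congrArg List.Nodup hs).mpr (List.nodup_append.mpr
                ⟨hrp.support_nodup, hq₂p.support_nodup, fun z hz₁ z' hz₂ hzz => hdisj z hz₁ (hzz ▸ hz₂)⟩)
          exact hW ⟨u.1, u.2.1⟩ _ hcyc _ (Walk.start_mem_support _)
end

section
/- Let G be a simple graph, S a set of vertices of G, and W an S-forest of G. Let S_{≤1} be the set of vertices of W that belong to S ∩ W or have a G-neighbor in S ∩ W, and let S' = S_{≤1} ∖ S. Then for every edge {u, v} of G with u, v ∈ S', there is no single connected component C of the induced subgraph G[S ∩ W] such that both u and v have a neighbor in C. -/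
/-- Let `W` be an `S`-forest of `G` and `S' = S_{≤1} ∖ S`. Then for every edge
`{u, v}` of `G` with `u, v ∈ S'`, there is no single connected component `C` of `G[S ∩ W]`
such that both `u` and `v` have a neighbor in `C`. -/
theorem stmt6 {V : Type*} (G : SimpleGraph V) (S W : Set V) (hW : SForest G S W)
    (u v : V) (huv : G.Adj u v)
    (hu : u ∈ sle1 G S W \ S) (hv : v ∈ sle1 G S W \ S) :
    ¬ ∃ c : (G.induce (S ∩ W)).ConnectedComponent,
      (∃ x : ↥(S ∩ W), (G.induce (S ∩ W)).connectedComponentMk x = c ∧ G.Adj u (x : V)) ∧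
      (∃ y : ↥(S ∩ W), (G.induce (S ∩ W)).connectedComponentMk y = c ∧ G.Adj v (y : V)) := by
  classical
  rintro ⟨c, ⟨x, hxc, hux⟩, ⟨y, hyc, hvy⟩⟩
  have hunS : u ∉ S := hu.2
  have huW : u ∈ W := hu.1.1
  have hvnS : v ∉ S := hv.2
  have hvW : v ∈ W := hv.1.1
  have hreach : (G.induce (S ∩ W)).Reachable x y := by
    rw [← hyc] at hxc
    exact SimpleGraph.ConnectedComponent.exact hxc
  obtain ⟨w⟩ := hreach
  set p := w.toPath.1 with hp
  have hpath : p.IsPath := w.toPath.2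
  let f : G.induce (S ∩ W) →g G.induce W :=
    ⟨fun z => ⟨z.1, z.2.2⟩, fun h => h⟩
  have hfinj : Function.Injective f := by
    intro a b h
    apply Subtype.ext
    exact congrArg (fun z : ↥W => z.val) h
  set u' : ↥W := ⟨u, huW⟩ with hu'
  set v' : ↥W := ⟨v, hvW⟩ with hv'
  set x' : ↥W := f x with hx'
  set y' : ↥W := f y with hy'
  have hux' : (G.induce W).Adj u' x' := hux
  have hyv' : (G.induce W).Adj y' v' := hvy.symm
  have hvu' : (G.induce W).Adj v' u' := huv.symm
  set p' := p.map f with hp'def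
  have hp'path : p'.IsPath := SimpleGraph.Walk.map_isPath_of_injective hfinj hpath
  have hps : ∀ z : ↥W, z ∈ p'.support → (z : V) ∈ S ∩ W := by
    intro z hz
    rw [hp'def, SimpleGraph.Walk.support_map] at hz
    obtain ⟨a, _, rfl⟩ := List.mem_map.mp hz
    exact a.2
  have hu'p : u' ∉ p'.support := fun h => hunS (hps u' h).1
  have hv'p : v' ∉ p'.support := fun h => hvnS (hps v' h).1
  have hune : u' ≠ v' := fun h => huv.ne (congrArg Subtype.val h)
  have hux'ne : u' ≠ x' := fun h => hunS (by
    rw [show u = (x : V) from Subtype.ext_iff.mp h]; exact x.2.1)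
  have huy'ne : u' ≠ y' := fun h => hunS (by
    rw [show u = (y : V) from Subtype.ext_iff.mp h]; exact y.2.1)
  have hvx'ne : v' ≠ x' := fun h => hvnS (by
    rw [show v = (x : V) from Subtype.ext_iff.mp h]; exact x.2.1)
  have hvy'ne : v' ≠ y' := fun h => hvnS (by
    rw [show v = (y : V) from Subtype.ext_iff.mp h]; exact y.2.1)
  set q : (G.induce W).Walk y' u' :=
    SimpleGraph.Walk.cons hyv' (SimpleGraph.Walk.cons hvu' SimpleGraph.Walk.nil) with hq
  set cyc : (G.induce W).Walk u' u' := SimpleGraph.Walk.cons hux' (p'.append q) with hcyc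
  have hsupp : cyc.support = u' :: (p'.support ++ [v', u']) := by
    rw [hcyc, SimpleGraph.Walk.support_cons, SimpleGraph.Walk.support_append, hq]
    simp
  have hedges : cyc.edges = s(u', x') :: (p'.edges ++ [s(y', v'), s(v', u')]) := by
    rw [hcyc, SimpleGraph.Walk.edges_cons, SimpleGraph.Walk.edges_append, hq]
    simp
    exact Or.inl rfl
  have hcycle : cyc.IsCycle := by
    constructor
    · constructor
      · constructor
        rw [hedges]
        refine List.nodup_cons.mpr ⟨?_, ?_⟩
        · intro hmem
          rcases List.mem_append.mp hmem with h | h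
          · exact hu'p (SimpleGraph.Walk.fst_mem_support_of_mem_edges p' h)
          · simp only [List.mem_cons, List.not_mem_nil, or_false] at h
            rcases h with h | h
            · rcases Sym2.eq_iff.mp h with ⟨h1, _⟩ | ⟨h1, _⟩
              · exact huy'ne h1
              · exact hune h1
            · rcases Sym2.eq_iff.mp h with ⟨h1, _⟩ | ⟨_, h2⟩
              · exact hune h1
              · exact hvx'ne h2.symm
        · refine List.Nodup.append hp'path.edges_nodup ?_ ?_
          · refine List.nodup_cons.mpr ⟨?_, List.nodup_singleton _⟩
            intro h
            simp only [List.mem_cons, List.not_mem_nil, or_false] at h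
            rcases Sym2.eq_iff.mp h with ⟨h1, _⟩ | ⟨h1, _⟩
            · exact hvy'ne h1.symm
            · exact huy'ne h1.symm
          · intro e he
            intro hmem
            simp only [List.mem_cons, List.not_mem_nil, or_false] at hmem
            rcases hmem with rfl | rfl
            · exact hv'p (SimpleGraph.Walk.snd_mem_support_of_mem_edges p' he)
            · exact hv'p (SimpleGraph.Walk.fst_mem_support_of_mem_edges p' he)
      · simp [hcyc]
    · have htail : cyc.support.tail = p'.support ++ [v', u'] := by
        rw [hsupp]; rfl
      rw [htail]
      refine List.Nodup.append hp'path.support_nodup ?_ ?_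
      · refine List.nodup_cons.mpr ⟨?_, List.nodup_singleton _⟩
        simp only [List.mem_cons, List.not_mem_nil, or_false]
        exact fun h => hune h.symm
      · intro a ha hmem
        simp only [List.mem_cons, List.not_mem_nil, or_false] at hmem
        rcases hmem with rfl | rfl
        · exact hv'p ha
        · exact hu'p ha
  have hx'mem : x' ∈ cyc.support := by
    rw [hsupp]
    right
    exact List.mem_append.mpr (Or.inl (p'.start_mem_support))
  exact hW u' cyc hcycle x' hx'mem x.2.1
end

section
/- Let G be a simple graph with independence number at most d, let S be a set of vertices of G, and let X be a subset feedback vertex set of (G, S) of minimum cardinality. Then |S ∖ X| ≤ 2d and |X ∖ S| ≤ 2d. -/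
open SimpleGraph

section Acyclic

variable {W : Type*} {H : SimpleGraph W}

lemma path_length_eq_dist (hH : H.IsAcyclic) {a b : W} {p : H.Walk a b}
    (hp : p.IsPath) : p.length = H.dist a b := by
  have hrp : H.Reachable a b := ⟨p⟩
  obtain ⟨q, hq, hql⟩ := hrp.exists_path_of_dist
  have h := isAcyclic_iff_path_unique.mp hH ⟨p, hp⟩ ⟨q, hq⟩
  rw [← hql]
  exact congrArg Walk.length (congrArg Subtype.val h)

lemma dist_adj_cases (hH : H.IsAcyclic) {r u v : W} (hr : H.Reachable r u)
    (h : H.Adj u v) : H.dist r v = H.dist r u + 1 ∨ H.dist r u = H.dist r v + 1 := by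
  classical
  obtain ⟨p, hp, hl⟩ := hr.exists_path_of_dist
  by_cases hv : v ∈ p.support
  · right
    have h1 : (p.takeUntil v hv).length = H.dist r v :=
      path_length_eq_dist hH (hp.takeUntil hv)
    have h2 : (p.dropUntil v hv).IsPath := hp.dropUntil hv
    have hedge : (Walk.cons h.symm Walk.nil : H.Walk v u).IsPath := by
      simp [Walk.cons_isPath_iff, h.ne']
    have h3 := isAcyclic_iff_path_unique.mp hH ⟨p.dropUntil v hv, h2⟩ ⟨Walk.cons h.symm Walk.nil, hedge⟩
    have h4 : (p.dropUntil v hv).length = 1 := by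
      have := congrArg Walk.length (congrArg Subtype.val h3)
      simpa using this
    have hsum : (p.takeUntil v hv).length + (p.dropUntil v hv).length = p.length := by
      rw [← Walk.length_append, Walk.take_spec]
    omega
  · left
    have hcp : (p.concat h).IsPath := by
      rw [← Walk.isPath_reverse_iff, Walk.reverse_concat, Walk.cons_isPath_iff]
      constructor
      · rwa [Walk.isPath_reverse_iff]
      · rwa [Walk.support_reverse, List.mem_reverse]
    have := path_length_eq_dist hH hcp
    rw [Walk.length_concat] at this
    omega

lemma acyclic_card_le [Fintype W] (H : SimpleGraph W) (hH : H.IsAcyclic) :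
    ∃ I : Set W, I.Pairwise (fun u v => ¬ H.Adj u v) ∧ Fintype.card W ≤ 2 * I.ncard := by
  classical
  set r : W → W := fun v => (H.connectedComponentMk v).out with hr
  have hreach : ∀ v, H.Reachable (r v) v := by
    intro v
    exact SimpleGraph.ConnectedComponent.exact (Quot.out_eq _)
  have key : ∀ u v : W, H.Adj u v → ¬ (Even (H.dist (r u) u) ↔ Even (H.dist (r v) v)) := by
    intro u v hadj
    have hru : r u = r v := by
      have : H.connectedComponentMk u = H.connectedComponentMk v :=
        SimpleGraph.ConnectedComponent.connectedComponentMk_eq_of_adj hadj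
      simp [hr, this]
    rcases dist_adj_cases hH (hreach u) hadj with hcase | hcase <;>
      rw [← hru] at * <;> rw [hcase, Nat.even_add_one] <;> tauto
  set I0 : Set W := {v | Even (H.dist (r v) v)} with hI0
  have hp0 : I0.Pairwise (fun u v => ¬ H.Adj u v) := by
    intro a ha b hb _ hadj
    exact key a b hadj ⟨fun _ => hb, fun _ => ha⟩
  have hp1 : I0ᶜ.Pairwise (fun u v => ¬ H.Adj u v) := by
    intro a ha b hb _ hadj
    exact key a b hadj ⟨fun h => absurd h ha, fun h => absurd h hb⟩
  have hsum : I0.ncard + I0ᶜ.ncard = Fintype.card W := by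
    rw [Set.ncard_add_ncard_compl]
    simp [Set.ncard_univ, Nat.card_eq_fintype_card]
  rcases le_total I0.ncard I0ᶜ.ncard with hle | hle
  · exact ⟨I0ᶜ, hp1, by omega⟩
  · exact ⟨I0, hp0, by omega⟩

end Acyclic

/-- `X` is a subset feedback vertex set of `(G, S)`: no cycle of `G − X` (the subgraph induced
on the complement of `X`) contains a vertex of `S`. -/
def IsSFVS {V : Type*} (G : SimpleGraph V) (S X : Set V) : Prop :=
  SForest G S Xᶜ

/-- If every independent set of `G` has at most `d` vertices and `X` is a
subset feedback vertex set of `(G, S)` of minimum cardinality, then `|S ∖ X| ≤ 2d` and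
`|X ∖ S| ≤ 2d`. -/
theorem stmt7 {V : Type*} [Fintype V] (G : SimpleGraph V) (d : ℕ)
    (hα : ∀ I : Set V, I.Pairwise (fun u v => ¬ G.Adj u v) → I.ncard ≤ d)
    (S X : Set V) (hX : IsSFVS G S X)
    (hmin : ∀ Y : Set V, IsSFVS G S Y → X.ncard ≤ Y.ncard) :
    (S \ X).ncard ≤ 2 * d ∧ (X \ S).ncard ≤ 2 * d := by
  classical
  -- part 1
  have hsub : (S \ X) ≤ Xᶜ := fun v hv => hv.2
  have hac : (G.induce (S \ X)).IsAcyclic := by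
    intro u c hc
    set f := (G.induceHomOfLE hsub)
    have hc' : (c.map f.toHom).IsCycle := hc.map f.injective
    have hmem : f u ∈ (c.map f.toHom).support := Walk.start_mem_support _
    have := hX (f u) (c.map f.toHom) hc' (f u) hmem
    exact this u.2.1
  haveI : Fintype ↥(S \ X) := Fintype.ofFinite _
  obtain ⟨I, hI, hIcard⟩ := acyclic_card_le (G.induce (S \ X)) hac
  have hJ : (Subtype.val '' I : Set V).Pairwise (fun u v => ¬ G.Adj u v) := by
    rintro a ⟨x, hx, rfl⟩ b ⟨y, hy, rfl⟩ hne hadj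
    have hxy : x ≠ y := fun h => hne (congrArg _ h)
    exact hI hx hy hxy hadj
  have hJcard : (Subtype.val '' I : Set V).ncard = I.ncard :=
    Set.ncard_image_of_injective _ Subtype.val_injective
  have hcard1 : (S \ X).ncard = Fintype.card ↥(S \ X) := by
    rw [← Nat.card_coe_set_eq, Nat.card_eq_fintype_card]
  have part1 : (S \ X).ncard ≤ 2 * d := by
    have := hα _ hJ
    rw [hJcard] at this
    omega
  refine ⟨part1, ?_⟩
  -- part 2
  have hS : IsSFVS G S S := by
    intro u c hc v hv
    exact v.2
  have hXS : X.ncard ≤ S.ncard := hmin S hS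
  have hX' : (X \ S).ncard + (X ∩ S).ncard = X.ncard := by
    rw [← Set.ncard_union_eq (Set.disjoint_of_subset_right Set.inter_subset_right
      Set.disjoint_sdiff_left) (Set.toFinite _) (Set.toFinite _), Set.diff_union_inter]
  have hS' : (S \ X).ncard + (S ∩ X).ncard = S.ncard := by
    rw [← Set.ncard_union_eq (Set.disjoint_of_subset_right Set.inter_subset_right
      Set.disjoint_sdiff_left) (Set.toFinite _) (Set.toFinite _), Set.diff_union_inter]
  have hint : (X ∩ S).ncard = (S ∩ X).ncard := by rw [Set.inter_comm]
  omega
end
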